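/- Let χ ∈ C^∞(ℝ) satisfy χ(t) = 0 for |t| > T, χ(t) = t for |t| < αT, |χ(t)| ≤ 2αT, and χ'(t) ≥ -2α. Let ψ ∈ C_c^∞(ℝ;[0,1]) with ψ = 1 on [-1,1], ψ = 0 outside [-2,2]. Given an escape function G₀ with H_p G₀ ≥ 0, H_p G₀ ≤ C on a neighbourhood of the energy shell, and |H_p(|x|)| ≤ C₁ there, define G(ρ) = χ(G₀(ρ))ψ(p(ρ)/δ)ψ(|x(ρ)|/R). Then H_p G ≥ -C₀α(1 + T/R) everywhere, H_p G ≥ 0 on the region {|x| < R, |G₀| ≤ αT}, and H_p G ≥ 1 where additionally H_p G₀ ≥ 1; moreover G is compactly supported. -/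

import Mathlib

/-- Construction of the compactly supported escape function (Lemma 6.1): with
`G(ρ) = χ(G₀(ρ))·ψ(p(ρ)/δ)·ψ(|x(ρ)|/R)` and `H_p f` the Lie derivative of `f` along the
Hamiltonian flow `Φ`, one has `H_pG ≥ -C₀α(1+T/R)` everywhere, `H_pG ≥ 0` on
`{|x| < R, |G₀| < αT}`, `H_pG ≥ 1` where additionally `|p| ≤ δ` and `H_pG₀ ≥ 1`, and `G`
is compactly supported. -/
theorem stmt15 {n : ℕ}
    (χ χ' ψ ψ' : ℝ → ℝ)
    (G₀ p LG₀ Lx LG : (EuclideanSpace ℝ (Fin n) × EuclideanSpace ℝ (Fin n)) → ℝ)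
    (Φ : ℝ → (EuclideanSpace ℝ (Fin n) × EuclideanSpace ℝ (Fin n)) →
      (EuclideanSpace ℝ (Fin n) × EuclideanSpace ℝ (Fin n)))
    (T α δ R C C₁ Cψ : ℝ)
    (hT : 0 < T) (hα : 0 < α) (hδ : 0 < δ) (hR : 0 < R)
    (hC : 0 ≤ C) (hC₁ : 0 ≤ C₁) (hCψ : 0 ≤ Cψ)
    (hχd : ∀ t, HasDerivAt χ (χ' t) t)
    (hχ0 : ∀ t, T < |t| → χ t = 0)
    (hχid : ∀ t, |t| < α * T → χ t = t)
    (hχb : ∀ t, |χ t| ≤ 2 * α * T)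
    (hχ' : ∀ t, -(2 * α) ≤ χ' t)
    (hψd : ∀ t, HasDerivAt ψ (ψ' t) t)
    (hψ01 : ∀ t, ψ t ∈ Set.Icc (0 : ℝ) 1)
    (hψ1 : ∀ t, |t| ≤ 1 → ψ t = 1)
    (hψ0 : ∀ t, 2 ≤ |t| → ψ t = 0)
    (hψ'b : ∀ t, |ψ' t| ≤ Cψ)
    (hΦ0 : ∀ ρ, Φ 0 ρ = ρ)
    (hpinv : ∀ t ρ, p (Φ t ρ) = p ρ)
    (hG₀L : ∀ ρ, HasDerivAt (fun t => G₀ (Φ t ρ)) (LG₀ ρ) 0)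
    (hxL : ∀ ρ, HasDerivAt (fun t => ‖(Φ t ρ).1‖) (Lx ρ) 0)
    (hLG₀pos : ∀ ρ, 0 ≤ LG₀ ρ)
    (hLG₀C : ∀ ρ, |p ρ| ≤ 2 * δ → LG₀ ρ ≤ C)
    (hLxC : ∀ ρ, |p ρ| ≤ 2 * δ → |Lx ρ| ≤ C₁)
    (hG₀cont : Continuous G₀) (hpcont : Continuous p)
    (hcompact : IsCompact {ρ : EuclideanSpace ℝ (Fin n) × EuclideanSpace ℝ (Fin n) |
      ‖ρ.1‖ ≤ 2 * R ∧ |p ρ| ≤ 2 * δ})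
    (hLG : ∀ ρ, HasDerivAt
      (fun t => χ (G₀ (Φ t ρ)) * ψ (p (Φ t ρ) / δ) * ψ (‖(Φ t ρ).1‖ / R)) (LG ρ) 0) :
    ∃ C₀ : ℝ, 0 < C₀ ∧
      (∀ ρ, -(C₀ * α * (1 + T / R)) ≤ LG ρ) ∧
      (∀ ρ, ‖ρ.1‖ < R → |G₀ ρ| < α * T → 0 ≤ LG ρ) ∧
      (∀ ρ, ‖ρ.1‖ < R → |G₀ ρ| < α * T → |p ρ| ≤ δ → 1 ≤ LG₀ ρ → 1 ≤ LG ρ) ∧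
      HasCompactSupport (fun ρ : EuclideanSpace ℝ (Fin n) × EuclideanSpace ℝ (Fin n) =>
        χ (G₀ ρ) * ψ (p ρ / δ) * ψ (‖ρ.1‖ / R)) := by

  -- derivative of χ at points where χ = id
  have hχ'1 : ∀ t, |t| < α * T → χ' t = 1 := by
    intro t ht
    have hopen : IsOpen {s : ℝ | |s| < α * T} := isOpen_lt continuous_abs continuous_const
    have hev : χ =ᶠ[nhds t] id := by
      filter_upwards [hopen.mem_nhds ht] with s hs
      exact hχid s hs
    exact (hχd t).unique ((hasDerivAt_id t).congr_of_eventuallyEq hev)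
  -- derivative of ψ at points where ψ = 1
  have hψ'0 : ∀ t, |t| < 1 → ψ' t = 0 := by
    intro t ht
    have hopen : IsOpen {s : ℝ | |s| < 1} := isOpen_lt continuous_abs continuous_const
    have hev : ψ =ᶠ[nhds t] (fun _ => (1 : ℝ)) := by
      filter_upwards [hopen.mem_nhds ht] with s hs
      exact hψ1 s hs.le
    exact (hψd t).unique ((hasDerivAt_const t (1 : ℝ)).congr_of_eventuallyEq hev)
  -- the formula for LG
  have key : ∀ ρ, LG ρ =
      (χ' (G₀ ρ) * LG₀ ρ * ψ (p ρ / δ)) * ψ (‖ρ.1‖ / R)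
      + (χ (G₀ ρ) * ψ (p ρ / δ)) * (ψ' (‖ρ.1‖ / R) * (Lx ρ / R)) := by
    intro ρ
    have hA : HasDerivAt (fun t => χ (G₀ (Φ t ρ))) (χ' (G₀ ρ) * LG₀ ρ) 0 := by
      have := (hχd (G₀ (Φ 0 ρ))).comp 0 (hG₀L ρ)
      simpa [hΦ0, Function.comp_def] using this
    have hB : HasDerivAt (fun t => ψ (‖(Φ t ρ).1‖ / R)) (ψ' (‖ρ.1‖ / R) * (Lx ρ / R)) 0 := by
      have hx : HasDerivAt (fun t => ‖(Φ t ρ).1‖ / R) (Lx ρ / R) 0 := (hxL ρ).div_const R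
      have := (hψd (‖(Φ 0 ρ).1‖ / R)).comp 0 hx
      simpa [hΦ0, Function.comp_def] using this
    have hF := (hA.mul_const (ψ (p ρ / δ))).mul hB
    have heq : (fun t => χ (G₀ (Φ t ρ)) * ψ (p (Φ t ρ) / δ) * ψ (‖(Φ t ρ).1‖ / R))
        = fun t => (χ (G₀ (Φ t ρ)) * ψ (p ρ / δ)) * ψ (‖(Φ t ρ).1‖ / R) := by
      funext t; rw [hpinv]
    have hLG' := hLG ρ
    rw [heq] at hLG'
    have := hLG'.unique hF
    simpa [hΦ0] using this
  refine ⟨2 * C + 2 * Cψ * C₁ + 1, by positivity, ?_, ?_, ?_, ?_⟩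
  · -- global lower bound
    intro ρ
    rw [key ρ]
    set g := G₀ ρ
    set ψp := ψ (p ρ / δ) with hψp
    set ψx := ψ (‖ρ.1‖ / R) with hψx
    have hψp01 := hψ01 (p ρ / δ)
    have hψx01 := hψ01 (‖ρ.1‖ / R)
    have hr : 0 < T / R := div_pos hT hR
    by_cases hp : |p ρ| ≤ 2 * δ
    · have h1 : -(2 * α * C) ≤ (χ' g * LG₀ ρ * ψp) * ψx := by
        have hq : -(2 * α * C) ≤ χ' g * LG₀ ρ := by
          nlinarith [hχ' g, hLG₀pos ρ, hLG₀C ρ hp, hα.le]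
        nlinarith [hψp01.1, hψp01.2, hψx01.1, hψx01.2, mul_nonneg hα.le hC,
          mul_nonneg hψp01.1 hψx01.1, mul_le_one₀ hψp01.2 hψx01.1 hψx01.2]
      have h2 : |(χ g * ψp) * (ψ' (‖ρ.1‖ / R) * (Lx ρ / R))|
          ≤ (2 * α * T * 1) * (Cψ * (C₁ / R)) := by
        rw [abs_mul, abs_mul, abs_mul, abs_div]
        have hRa : |R| = R := abs_of_pos hR
        gcongr
        · exact hχb g
        · rw [hψp]; rw [abs_of_nonneg hψp01.1]; exact hψp01.2
        · exact hψ'b _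
        · exact hLxC ρ hp
        · exact hRa.ge
      have h2' : -((2 * α * T * 1) * (Cψ * (C₁ / R)))
          ≤ (χ g * ψp) * (ψ' (‖ρ.1‖ / R) * (Lx ρ / R)) := neg_le_of_abs_le h2
      have harith : (2 * α * T * 1) * (Cψ * (C₁ / R)) = (2 * α * Cψ * C₁) * (T / R) := by
        ring
      rw [harith] at h2'
      nlinarith [mul_nonneg hα.le hr.le, mul_nonneg hC hα.le,
        mul_nonneg (mul_nonneg hCψ hC₁) hα.le,
        mul_nonneg (mul_nonneg hC hα.le) hr.le,
        mul_nonneg (mul_nonneg (mul_nonneg hCψ hC₁) hα.le) hr.le]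
    · have hp2 : (2 : ℝ) ≤ |p ρ / δ| := by
        rw [abs_div, abs_of_pos hδ]
        rw [le_div_iff₀ hδ]
        linarith [not_le.mp hp]
      have : ψp = 0 := by rw [hψp]; exact hψ0 _ hp2
      rw [this]
      have : (0:ℝ) ≤ (2 * C + 2 * Cψ * C₁ + 1) * α * (1 + T / R) := by positivity
      nlinarith
  · -- nonnegativity on the good region
    intro ρ hx hg
    rw [key ρ]
    have h1 : χ' (G₀ ρ) = 1 := hχ'1 _ hg
    have hxx : |‖ρ.1‖ / R| < 1 := by
      rw [abs_div, abs_of_pos hR, abs_of_nonneg (norm_nonneg _), div_lt_one hR]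
      exact hx
    have h2 : ψ' (‖ρ.1‖ / R) = 0 := hψ'0 _ hxx
    have h3 : ψ (‖ρ.1‖ / R) = 1 := hψ1 _ hxx.le
    rw [h1, h2, h3]
    simp only [mul_zero, zero_mul, add_zero, one_mul, mul_one]
    exact mul_nonneg (hLG₀pos ρ) (hψ01 _).1
  · -- ≥ 1 on the escape region
    intro ρ hx hg hp hLG₀1
    rw [key ρ]
    have h1 : χ' (G₀ ρ) = 1 := hχ'1 _ hg
    have hxx : |‖ρ.1‖ / R| < 1 := by
      rw [abs_div, abs_of_pos hR, abs_of_nonneg (norm_nonneg _), div_lt_one hR]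
      exact hx
    have h2 : ψ' (‖ρ.1‖ / R) = 0 := hψ'0 _ hxx
    have h3 : ψ (‖ρ.1‖ / R) = 1 := hψ1 _ hxx.le
    have h4 : ψ (p ρ / δ) = 1 := by
      apply hψ1
      rw [abs_div, abs_of_pos hδ, div_le_one hδ]
      exact hp
    rw [h1, h2, h3, h4]
    simpa using hLG₀1
  · -- compact support
    apply HasCompactSupport.intro hcompact
    intro ρ hρ
    simp only [Set.mem_setOf_eq, not_and_or, not_le] at hρ
    rcases hρ with h | h
    · have : ψ (‖ρ.1‖ / R) = 0 := by
        apply hψ0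
        rw [abs_div, abs_of_pos hR, abs_of_nonneg (norm_nonneg _), le_div_iff₀ hR]
        linarith
      simp [this]
    · have : ψ (p ρ / δ) = 0 := by
        apply hψ0
        rw [abs_div, abs_of_pos hδ, le_div_iff₀ hδ]
        linarith
      simp [this]
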